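/- Contaminated data quantile approximation: let x be a vector of length n with left p-quantile y' = lq_x(p), p in [0,1], and let w be obtained from x by removing n* < n of its entries. If y' is among the remaining entries of w (which holds in the setting where the removed entries are the contaminated ones and y' = lq_x(p) lies in w), then there exists p' with |p' - p| <= n*/(n - n*) such that y' = lq_w(p'). -/

import Mathlib

/-- The left `p`-quantile of a data vector `v` of length `N > 0`: the `⌈Np⌉`-th
smallest entry of `v` (for `p ∈ (0,1]`; for `p = 0` it is the smallest entry). -/
noncomputable def lqv {N : ℕ} (hN : 0 < N) (v : Fin N → ℝ) (p : ℝ) : ℝ :=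
  (v ∘ Tuple.sort v) ⟨min (N - 1) (max 1 ⌈(N : ℝ) * p⌉₊ - 1), by omega⟩

open scoped Classical in
/-- The degree of separation of `a` and `b` with respect to the data vector `v`:
the fraction of entries of `v` lying strictly between `a` and `b`. -/
noncomputable def dosv {N : ℕ} (v : Fin N → ℝ) (a b : ℝ) : ℝ :=
  ((Finset.univ.filter fun i => min a b < v i ∧ v i < max a b).card : ℝ) / N


open Finset

noncomputable def clt {N : ℕ} (v : Fin N → ℝ) (y : ℝ) : ℕ :=
  (univ.filter fun i => v i < y).card

noncomputable def cle {N : ℕ} (v : Fin N → ℝ) (y : ℝ) : ℕ :=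
  (univ.filter fun i => v i ≤ y).card

lemma clt_perm {N : ℕ} (v : Fin N → ℝ) (σ : Equiv.Perm (Fin N)) (y : ℝ) :
    clt (v ∘ σ) y = clt v y := by
  exact Finset.card_equiv σ (by intro i; simp)

lemma cle_perm {N : ℕ} (v : Fin N → ℝ) (σ : Equiv.Perm (Fin N)) (y : ℝ) :
    cle (v ∘ σ) y = cle v y := by
  exact Finset.card_equiv σ (by intro i; simp)

lemma card_filter_lt_fin {N : ℕ} (j : Fin N) :
    (univ.filter fun i : Fin N => i < j).card = j := by
  have : (univ.filter fun i : Fin N => i < j) = Finset.Iio j := by ext i; simp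
  rw [this, Fin.card_Iio]

lemma card_filter_le_fin {N : ℕ} (j : Fin N) :
    (univ.filter fun i : Fin N => i ≤ j).card = j + 1 := by
  have : (univ.filter fun i : Fin N => i ≤ j) = Finset.Iic j := by ext i; simp
  rw [this, Fin.card_Iic]

lemma mono_rank_le {N : ℕ} {s : Fin N → ℝ} (hs : Monotone s) {y : ℝ} {j : Fin N}
    (h : s j = y) : clt s y ≤ j := by
  have hsub : (univ.filter fun i => s i < y) ⊆ univ.filter fun i : Fin N => i < j := by
    intro i hi
    simp only [mem_filter, mem_univ, true_and] at *
    by_contra h'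
    exact absurd (h ▸ hi) (not_lt.mpr (h ▸ hs (not_lt.mp h')))
  calc clt s y ≤ _ := card_le_card hsub
    _ = j := card_filter_lt_fin j

lemma mono_rank_lt {N : ℕ} {s : Fin N → ℝ} (hs : Monotone s) {y : ℝ} {j : Fin N}
    (h : s j = y) : (j : ℕ) < cle s y := by
  have hsub : (univ.filter fun i : Fin N => i ≤ j) ⊆ univ.filter fun i => s i ≤ y := by
    intro i hi
    simp only [mem_filter, mem_univ, true_and] at *
    exact h ▸ hs hi
  have := card_le_card hsub
  rw [card_filter_le_fin] at this
  unfold cle; omega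

lemma mono_rank_eq {N : ℕ} {s : Fin N → ℝ} (hs : Monotone s) {y : ℝ} {j : Fin N}
    (h1 : clt s y ≤ j) (h2 : (j : ℕ) < cle s y) : s j = y := by
  rcases lt_trichotomy (s j) y with h | h | h
  · exfalso
    have hsub : (univ.filter fun i : Fin N => i ≤ j) ⊆ univ.filter fun i => s i < y := by
      intro i hi
      simp only [mem_filter, mem_univ, true_and] at *
      exact lt_of_le_of_lt (hs hi) h
    have := card_le_card hsub
    rw [card_filter_le_fin] at this
    unfold clt at h1; omega
  · exact h
  · exfalso
    have hsub : (univ.filter fun i => s i ≤ y) ⊆ univ.filter fun i : Fin N => i < j := by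
      intro i hi
      simp only [mem_filter, mem_univ, true_and] at *
      by_contra h'
      exact absurd (lt_of_le_of_lt hi h) (not_lt.mpr (hs (not_lt.mp h')))
    have := card_le_card hsub
    rw [card_filter_lt_fin] at this
    unfold cle at h2; omega
open Finset

lemma card_filter_val_lt {n m : ℕ} (h : m ≤ n) :
    (univ.filter fun i : Fin n => (i : ℕ) < m).card = m := by
  have : (univ.filter fun i : Fin n => (i : ℕ) < m) = univ.image (Fin.castLE h) := by
    ext i
    simp only [mem_filter, mem_univ, true_and, mem_image]
    constructor
    · intro hi; exact ⟨⟨i, hi⟩, Fin.ext rfl⟩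
    · rintro ⟨j, rfl⟩; exact j.isLt
  rw [this, card_image_of_injective _ (Fin.castLE_injective h)]
  simp

lemma card_filter_val_ge {n m : ℕ} (h : m ≤ n) :
    (univ.filter fun i : Fin n => ¬ (i : ℕ) < m).card = n - m := by
  have h2 := Finset.card_filter_add_card_filter_not
    (s := (univ : Finset (Fin n))) (p := fun i : Fin n => (i : ℕ) < m)
  rw [card_filter_val_lt h, card_univ, Fintype.card_fin] at h2
  omega

lemma card_filter_castLE_le {n m : ℕ} (h : m ≤ n) (Q : Fin n → Prop) [DecidablePred Q] :
    (univ.filter fun i : Fin m => Q (Fin.castLE h i)).card ≤ (univ.filter Q).card := by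
  apply Finset.card_le_card_of_injOn (fun i => Fin.castLE h i)
  · intro i hi; simp only [mem_coe, mem_filter, mem_univ, true_and] at *; exact hi
  · intro a _ b _ hab; exact Fin.castLE_injective h hab

lemma card_filter_le_castLE {n m : ℕ} (h : m ≤ n) (Q : Fin n → Prop) [DecidablePred Q] :
    (univ.filter Q).card ≤ (univ.filter fun i : Fin m => Q (Fin.castLE h i)).card + (n - m) := by
  have hsub : univ.filter Q ⊆
      ((univ.filter fun i : Fin m => Q (Fin.castLE h i)).image (Fin.castLE h)) ∪
        (univ.filter fun i : Fin n => ¬ (i : ℕ) < m) := by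
    intro i hi
    simp only [mem_filter, mem_univ, true_and, mem_union, mem_image] at *
    by_cases hc : (i : ℕ) < m
    · left
      have he : Fin.castLE h ⟨i, hc⟩ = i := Fin.ext rfl
      refine ⟨⟨i, hc⟩, ?_, he⟩
      rw [he]; exact hi
    · right; exact hc
  calc (univ.filter Q).card ≤ _ := card_le_card hsub
    _ ≤ _ + _ := card_union_le _ _
    _ ≤ _ := by
        rw [card_filter_val_ge h]
        gcongr
        exact card_image_le

theorem contaminated_data_quantile (n ns : ℕ) (hns : ns < n)
    (x : Fin n → ℝ) (p : ℝ) (hp : p ∈ Set.Icc (0 : ℝ) 1)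
    (w : Fin (n - ns) → ℝ) (hw : w = fun i => x (Fin.castLE (Nat.sub_le n ns) i))
    (hmem : ∃ i, w i = lqv (by omega : 0 < n) x p) :
    ∃ p' : ℝ, |p' - p| ≤ (ns : ℝ) / (n - ns) ∧
      lqv (by omega : 0 < n) x p = lqv (by omega : 0 < n - ns) w p' := by
  obtain ⟨hp0, hp1⟩ := hp
  subst hw
  set w : Fin (n - ns) → ℝ := fun i => x (Fin.castLE (Nat.sub_le n ns) i) with hw
  have hmn : n - ns ≤ n := Nat.sub_le n ns
  have hm0 : 0 < n - ns := by omega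
  have hm0' : (0 : ℝ) < ((n - ns : ℕ) : ℝ) := by exact_mod_cast hm0
  set y := lqv (by omega : 0 < n) x p with hydef
  have hsx : Monotone (x ∘ Tuple.sort x) := Tuple.monotone_sort x
  have hsw : Monotone (w ∘ Tuple.sort w) := Tuple.monotone_sort w
  set c := ⌈(n : ℝ) * p⌉₊ with hcdef
  have hceil : c ≤ n := by
    rw [hcdef]
    apply Nat.ceil_le.mpr
    nlinarith [Nat.cast_nonneg (α := ℝ) n]
  set k : ℕ := min (n - 1) (max 1 c - 1) with hkdef
  have hkn : k < n := by omega
  have hyk : y = (x ∘ Tuple.sort x) ⟨k, hkn⟩ := rfl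
  -- rank of y in x
  have hclx : clt x y ≤ k := by
    have := mono_rank_le hsx hyk.symm
    rwa [clt_perm] at this
  have hclex : k < cle x y := by
    have := mono_rank_lt hsx hyk.symm
    rwa [cle_perm] at this
  -- counts for w versus x
  have hclw_le : clt w y ≤ clt x y := by
    unfold clt
    exact card_filter_castLE_le (Nat.sub_le n ns) (fun j => x j < y)
  have hclex_le : cle x y ≤ cle w y + ns := by
    have h := card_filter_le_castLE (Nat.sub_le n ns) (fun j => x j ≤ y)
    have hnm : n - (n - ns) = ns := by omega
    rw [hnm] at h
    unfold cle
    exact h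
  -- y occurs in w
  obtain ⟨i0, hi0⟩ := hmem
  have hcc : clt w y < cle w y := by
    apply card_lt_card
    rw [Finset.ssubset_iff_of_subset
      (monotone_filter_right _ (fun i _ h => le_of_lt h))]
    exact ⟨i0, by simp [hi0], by simp [hi0]⟩
  have hclem : cle w y ≤ n - ns := by
    calc cle w y ≤ (univ : Finset (Fin (n - ns))).card := card_filter_le _ _
      _ = n - ns := by simp
  -- the target index r
  set r : ℕ := min k (cle w y - 1) with hrdef
  have hrm : r ≤ n - ns - 1 := by omega
  have hrlt : r < n - ns := by omega
  have hclt_r : clt w y ≤ r := by omega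
  have hr_cle : r < cle w y := by omega
  have hkr : k ≤ r + ns := by omega
  have ht : (w ∘ Tuple.sort w) ⟨r, hrlt⟩ = y := by
    apply mono_rank_eq hsw
    · rw [clt_perm]; exact hclt_r
    · rw [cle_perm]; exact hr_cle
  -- real arithmetic
  have h1 : (n : ℝ) * p ≤ (k : ℝ) + 1 := by
    have hle : (n : ℝ) * p ≤ c := Nat.le_ceil _
    have hck : c ≤ k + 1 := by omega
    calc (n : ℝ) * p ≤ c := hle
      _ ≤ (k : ℝ) + 1 := by exact_mod_cast hck
  have hnr : ((n - ns : ℕ) : ℝ) = (n : ℝ) - ns := Nat.cast_sub hns.le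
  set p' : ℝ := min (((r : ℝ) + 1) / ((n - ns : ℕ) : ℝ)) (p + ns / ((n - ns : ℕ) : ℝ)) with hpdef
  have key : ((n - ns : ℕ) : ℝ) * p ≤ (r : ℝ) + 1 + ns := by
    have hmp : ((n - ns : ℕ) : ℝ) * p ≤ (n : ℝ) * p :=
      mul_le_mul_of_nonneg_right (by exact_mod_cast hmn) hp0
    have hk' : (k : ℝ) + 1 ≤ (r : ℝ) + 1 + ns := by exact_mod_cast by omega
    linarith
  refine ⟨p', ?_, ?_⟩
  · -- |p' - p| ≤ ns / ((n - ns : ℕ) : ℝ)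
    rw [abs_le, ← hnr]
    constructor
    · have hlow : p - (ns : ℝ) / ((n - ns : ℕ) : ℝ) ≤ p' := by
        apply le_min
        · rw [sub_le_iff_le_add, ← add_div, le_div_iff₀ hm0']
          linarith
        · have hq : (0 : ℝ) ≤ (ns : ℝ) / ((n - ns : ℕ) : ℝ) := by positivity
          linarith
      linarith
    · have hub := min_le_right (((r : ℝ) + 1) / ((n - ns : ℕ) : ℝ)) (p + ns / ((n - ns : ℕ) : ℝ))
      have : p' ≤ p + ns / ((n - ns : ℕ) : ℝ) := hub
      linarith
  · -- quantile equality
    have hub : p' ≤ ((r : ℝ) + 1) / ((n - ns : ℕ) : ℝ) := min_le_left _ _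
    have hceil_le : ⌈((n - ns : ℕ) : ℝ) * p'⌉₊ ≤ r + 1 := by
      apply Nat.ceil_le.mpr
      rw [le_div_iff₀ hm0'] at hub
      push_cast
      linarith
    have hidx : min (n - ns - 1) (max 1 ⌈((n - ns : ℕ) : ℝ) * p'⌉₊ - 1) = r := by
      rcases Nat.eq_zero_or_pos r with hr0 | hr1
      · omega
      · -- r ≥ 1
        have hc1 : 1 ≤ c := by omega
        have hkc : (k : ℝ) < (n : ℝ) * p := by
          have hc_lt : (c : ℝ) < (n : ℝ) * p + 1 := by
            rw [hcdef]
            exact Nat.ceil_lt_add_one (by positivity)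
          have hkc' : (k : ℝ) + 1 = c := by exact_mod_cast (by omega : k + 1 = c)
          linarith
        have hrmp : (r : ℝ) < ((n - ns : ℕ) : ℝ) * p + ns := by
          have hrk : (r : ℝ) ≤ k := by exact_mod_cast (by omega : r ≤ k)
          have hnp : (n : ℝ) * p ≤ ((n - ns : ℕ) : ℝ) * p + ns := by nlinarith [hnr]
          linarith
        have hlt : (r : ℝ) < ((n - ns : ℕ) : ℝ) * p' := by
          rcases min_cases (((r : ℝ) + 1) / ((n - ns : ℕ) : ℝ)) (p + ns / ((n - ns : ℕ) : ℝ)) with ⟨hmin, -⟩ | ⟨hmin, -⟩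
          · rw [hpdef, hmin]
            have : ((n - ns : ℕ) : ℝ) * (((r : ℝ) + 1) / ((n - ns : ℕ) : ℝ)) = (r : ℝ) + 1 := by field_simp
            rw [this]; linarith
          · rw [hpdef, hmin]
            have : ((n - ns : ℕ) : ℝ) * (p + (ns : ℝ) / ((n - ns : ℕ) : ℝ)) = ((n - ns : ℕ) : ℝ) * p + ns := by field_simp
            rw [this]; exact hrmp
        have hgec : r + 1 ≤ ⌈((n - ns : ℕ) : ℝ) * p'⌉₊ := Nat.lt_ceil.mpr hlt
        omega
    show y = (w ∘ Tuple.sort w) ⟨min (n - ns - 1) (max 1 ⌈((n - ns : ℕ) : ℝ) * p'⌉₊ - 1), by omega⟩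
    exact ht.symm.trans (congrArg _ (Fin.ext hidx.symm))
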